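/- Let k be a field and X a type; in F := FreeLieAlgebra k (X ⊕ X), let φ : F → F be the unique Lie algebra homomorphism with φ(ι(Sum.inl x)) = ι(Sum.inl x) and φ(ι(Sum.inr x)) = ι(Sum.inl x), let j : FreeLieAlgebra k X → F be the Lie algebra homomorphism induced by x ↦ ι(Sum.inl x), and let V be the Lie ideal of F generated by the dotted generators {ι(Sum.inr x) : x ∈ X}. Then the image of the submodule V under φ equals the range of j. -/

import Mathlib

/-- The image under `φ` of the Lie ideal `V` generated by the dotted generators
equals the range of the canonical embedding `j : FreeLieAlgebra k X → FreeLieAlgebra k (X ⊕ X)`. -/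
theorem phi_image_dotted_ideal_eq_plain_range (k : Type*) [Field k] (X : Type*)
    (φ : FreeLieAlgebra k (X ⊕ X) →ₗ⁅k⁆ FreeLieAlgebra k (X ⊕ X))
    (hφl : ∀ x : X, φ (FreeLieAlgebra.of k (Sum.inl x)) = FreeLieAlgebra.of k (Sum.inl x))
    (hφr : ∀ x : X, φ (FreeLieAlgebra.of k (Sum.inr x)) = FreeLieAlgebra.of k (Sum.inl x))
    (j : FreeLieAlgebra k X →ₗ⁅k⁆ FreeLieAlgebra k (X ⊕ X))
    (hj : j = FreeLieAlgebra.lift k fun x : X => FreeLieAlgebra.of k (Sum.inl x))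
    (V : LieIdeal k (FreeLieAlgebra k (X ⊕ X)))
    (hV : V = LieSubmodule.lieSpan k (FreeLieAlgebra k (X ⊕ X))
        (Set.range fun x : X => FreeLieAlgebra.of k (Sum.inr x))) :
    Submodule.map φ.toLinearMap (LieSubmodule.toSubmodule V) =
      LinearMap.range j.toLinearMap := by
  -- dotted generators belong to V
  have hgen : ∀ x : X, FreeLieAlgebra.of k (Sum.inr x) ∈ V := by
    intro x
    rw [hV]
    exact LieSubmodule.subset_lieSpan ⟨x, rfl⟩
  -- the Lie subalgebra underlying V
  set K : LieSubalgebra k (FreeLieAlgebra k (X ⊕ X)) := LieIdeal.toLieSubalgebra k _ V with hK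
  -- map into K hitting the dotted copy
  let g : FreeLieAlgebra k X →ₗ⁅k⁆ K :=
    FreeLieAlgebra.lift k fun x : X => (⟨FreeLieAlgebra.of k (Sum.inr x), hgen x⟩ : K)
  let j' : FreeLieAlgebra k X →ₗ⁅k⁆ FreeLieAlgebra k (X ⊕ X) :=
    FreeLieAlgebra.lift k fun x : X => FreeLieAlgebra.of k (Sum.inr x)
  have hj' : K.incl.comp g = j' := by
    apply FreeLieAlgebra.hom_ext
    intro x
    simp [g, j']
  have hj'mem : ∀ y, j' y ∈ V := by
    intro y
    rw [← hj']
    exact (g y).2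
  -- φ ∘ j' = j
  have hφj' : φ.comp j' = j := by
    rw [hj]
    apply FreeLieAlgebra.hom_ext
    intro x
    simp [j', hφr]
  -- π collapsing both copies to the plain copy
  let π : FreeLieAlgebra k (X ⊕ X) →ₗ⁅k⁆ FreeLieAlgebra k X :=
    FreeLieAlgebra.lift k (Sum.elim (FreeLieAlgebra.of k) (FreeLieAlgebra.of k))
  have hφfac : j.comp π = φ := by
    apply FreeLieAlgebra.hom_ext
    intro x
    cases x with
    | inl x => simp [π, hj, hφl]
    | inr x => simp [π, hj, hφr]
  apply le_antisymm
  · rintro z ⟨v, hv, rfl⟩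
    exact ⟨π v, by rw [← hφfac]; rfl⟩
  · rintro z ⟨y, rfl⟩
    exact ⟨j' y, hj'mem y, by rw [← hφj']; rfl⟩
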